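/- Let n, p be positive integers with min(p, n−p) ≥ 2, and let Y ∈ ℝ^{n×p} have orthonormal columns (YᵀY = I_p). Then there exists a matrix Z ∈ ℝ^{n×p} with ZᵀY = 0 whose Frobenius norm satisfies ‖Z‖_F ≥ π/2 while every singular value of Z is strictly less than π/2. -/

import Mathlib

open Matrix
set_option maxHeartbeats 1600000

lemma sq_le_imp_le (a b : ℝ) (ha : 0 ≤ a) (hb : 0 < b) (h : a ^ 2 ≤ b ^ 2) : a ≤ b := by
  nlinarith

lemma c_facts : ∃ c : ℝ, 0 < c ∧ c < Real.pi / 2 ∧ 2 * c ^ 2 = (Real.pi / 2) ^ 2 := by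
  refine ⟨Real.pi / (2 * Real.sqrt 2), ?_, ?_, ?_⟩
  · have hs2pos : 0 < Real.sqrt 2 := Real.sqrt_pos.mpr (by norm_num)
    positivity
  · have hs2 : (Real.sqrt 2) ^ 2 = 2 := Real.sq_sqrt (by norm_num)
    have hs2pos : 0 < Real.sqrt 2 := Real.sqrt_pos.mpr (by norm_num)
    have hs2gt : 1 < Real.sqrt 2 := by nlinarith
    rw [div_lt_div_iff₀ (by positivity) (by norm_num)]
    nlinarith [Real.pi_pos]
  · have hs2 : (Real.sqrt 2) ^ 2 = 2 := Real.sq_sqrt (by norm_num)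
    rw [div_pow, div_pow, mul_pow, hs2]
    norm_num
    ring

/-- the cut-locus condition strictly improves on the
injectivity radius.
Let `min(p, n−p) ≥ 2` and let `Y ∈ ℝ^{n×p}` have orthonormal columns. Then
there exists `Z ∈ ℝ^{n×p}` with `ZᵀY = 0`, Frobenius norm
`‖Z‖_F = sqrt(tr(ZᵀZ)) ≥ π/2`, while every singular value of `Z` (i.e., the
diagonal of any thin SVD of `Z`) is strictly less than `π/2`. -/
theorem cut_locus_beats_injectivity_radius
    (n p : ℕ) (hmin : 2 ≤ min p (n - p)) (hpn : p ≤ n)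
    (Y : Matrix (Fin n) (Fin p) ℝ) (hY : Yᵀ * Y = 1) :
    ∃ Z : Matrix (Fin n) (Fin p) ℝ,
      Zᵀ * Y = 0 ∧
      Real.pi / 2 ≤ Real.sqrt ((Zᵀ * Z).trace) ∧
      (∀ (U : Matrix (Fin n) (Fin p) ℝ) (V : Matrix (Fin p) (Fin p) ℝ)
          (μ : Fin p → ℝ),
        Uᵀ * U = 1 → Vᵀ * V = 1 → (∀ i, 0 ≤ μ i) →
        Z = U * Matrix.diagonal μ * Vᵀ →
        ∀ i, μ i < Real.pi / 2) := by
  have hp : 2 ≤ p := le_trans hmin (min_le_left _ _)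
  have hnp : 2 ≤ n - p := le_trans hmin (min_le_right _ _)
  set g : Fin p → EuclideanSpace ℝ (Fin n) := fun k => WithLp.toLp 2 (fun i => Y i k) with hg
  set S : Submodule ℝ (EuclideanSpace ℝ (Fin n)) := Submodule.span ℝ (Set.range g) with hS
  have hSfr : Module.finrank ℝ S ≤ p := by
    simpa [Set.finrank, hS] using finrank_range_le_card g
  have hfrE : Module.finrank ℝ (EuclideanSpace ℝ (Fin n)) = n := by simp
  have hfro : 2 ≤ Module.finrank ℝ Sᗮ := by
    have h := Submodule.finrank_add_finrank_orthogonal S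
    omega
  set b := stdOrthonormalBasis ℝ Sᗮ with hb
  set i0 : Fin (Module.finrank ℝ ↥Sᗮ) := ⟨0, by omega⟩ with hi0
  set i1 : Fin (Module.finrank ℝ ↥Sᗮ) := ⟨1, by omega⟩ with hi1
  set j0 : Fin p := ⟨0, by omega⟩ with hj0
  set j1 : Fin p := ⟨1, by omega⟩ with hj1
  have hj01 : j0 ≠ j1 := by simp [hj0, hj1, Fin.ext_iff]
  have hbb : ∀ a c, inner ℝ ((b a : EuclideanSpace ℝ (Fin n))) ((b c : EuclideanSpace ℝ (Fin n)))
      = (if a = c then (1:ℝ) else 0) := by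
    intro a c
    have hon := b.orthonormal
    rw [orthonormal_iff_ite] at hon
    rw [← Submodule.coe_inner]
    exact hon a c
  have hi01 : i0 ≠ i1 := by simp [hi0, hi1, Fin.ext_iff]
  clear_value b i0 i1 j0 j1
  obtain ⟨w, hw⟩ : ∃ w : Fin p → EuclideanSpace ℝ (Fin n),
      w = fun j => if j = j0 then (b i0 : EuclideanSpace ℝ (Fin n))
        else if j = j1 then (b i1 : EuclideanSpace ℝ (Fin n)) else 0 := ⟨_, rfl⟩
  have hwmem : ∀ j, w j ∈ Sᗮ := by
    intro j
    rw [hw]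
    dsimp only
    split_ifs <;> simp [Submodule.coe_mem, Submodule.zero_mem]
  have hinner : ∀ j k : Fin p, inner ℝ (w j) (w k)
      = (if j = k ∧ (j = j0 ∨ j = j1) then (1:ℝ) else 0) := by
    intro j k
    rw [hw]
    dsimp only
    by_cases hjj0 : j = j0 <;> by_cases hkk0 : k = j0 <;>
      by_cases hjj1 : j = j1 <;> by_cases hkk1 : k = j1 <;>
      simp only [if_pos, if_neg, hjj0, hkk0, hjj1, hkk1, hbb, if_true, if_false,
        inner_zero_right, inner_zero_left] <;>
      simp_all [Fin.ext_iff, eq_comm] <;> (simp only [← real_inner_self_eq_norm_sq, ← hbb]; simp [hi0, hi1])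
  obtain ⟨c, hcpos, hclt, hc2⟩ := c_facts
  obtain ⟨Z, hZdef⟩ : ∃ Z : Matrix (Fin n) (Fin p) ℝ,
      Z = Matrix.of (fun i j => c * w j i) := ⟨_, rfl⟩
  obtain ⟨d, hddef⟩ : ∃ d : Fin p → ℝ,
      d = fun j => if j = j0 ∨ j = j1 then c ^ 2 else 0 := ⟨_, rfl⟩
  have hdle' : ∀ j, d j ≤ c ^ 2 := by
    intro j; rw [hddef]; dsimp only; split_ifs <;> nlinarith
  have hdnn' : ∀ j, 0 ≤ d j := by
    intro j; rw [hddef]; dsimp only; split_ifs <;> nlinarith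
  have hinner' : ∀ j k : Fin p, (∑ x, w j x * w k x)
      = (if j = k ∧ (j = j0 ∨ j = j1) then (1:ℝ) else 0) := by
    intro j k
    have h := hinner j k
    simpa [PiLp.inner_apply, RCLike.inner_apply, mul_comm] using h
  have key : ∀ j k, (Zᵀ * Z) j k
      = c ^ 2 * (if j = k ∧ (j = j0 ∨ j = j1) then (1:ℝ) else 0) := by
    intro j k
    rw [hZdef]
    simp only [Matrix.mul_apply, Matrix.transpose_apply, Matrix.of_apply]
    have hterm : ∀ x : Fin n, (c * w j x) * (c * w k x) = c ^ 2 * (w j x * w k x) :=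
      fun x => by ring
    rw [Finset.sum_congr rfl (fun x _ => hterm x), ← Finset.mul_sum, hinner' j k]
  have hZZ : Zᵀ * Z = Matrix.diagonal d := by
    ext j k
    rw [key, Matrix.diagonal_apply, hddef]
    by_cases hjk : j = k <;> simp [hjk]
  have hZY : Zᵀ * Y = 0 := by
    ext j k
    rw [hZdef]
    simp only [Matrix.mul_apply, Matrix.transpose_apply, Matrix.of_apply,
      Matrix.zero_apply]
    have hgk : g k ∈ S := Submodule.subset_span ⟨k, rfl⟩
    have h0 : (inner ℝ (g k) (w j) : ℝ) = 0 :=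
      (Submodule.mem_orthogonal S (w j)).mp (hwmem j) (g k) hgk
    have h0' : (∑ x, g k x * w j x) = 0 := by
      simpa [PiLp.inner_apply, RCLike.inner_apply, mul_comm] using h0
    have hterm : ∀ x : Fin n, (c * w j x) * Y x k = c * (g k x * w j x) :=
      fun x => by show _ = c * (Y x k * w j x); ring
    rw [Finset.sum_congr rfl (fun x _ => hterm x), ← Finset.mul_sum, h0', mul_zero]
  have htr : (Zᵀ * Z).trace = 2 * c ^ 2 := by
    rw [hZZ, Matrix.trace_diagonal, hddef]
    have hsplit : ∀ j : Fin p, (if j = j0 ∨ j = j1 then c ^ 2 else 0)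
        = (if j = j0 then c ^ 2 else 0) + (if j = j1 then c ^ 2 else 0) := by
      intro j
      by_cases h0 : j = j0
      · have hne1 : j ≠ j1 := by rw [h0]; exact hj01
        rw [if_pos (Or.inl h0), if_pos h0, if_neg hne1, add_zero]
      · by_cases h1 : j = j1
        · rw [if_pos (Or.inr h1), if_neg h0, if_pos h1, zero_add]
        · rw [if_neg (by rintro (h | h) <;> contradiction), if_neg h0, if_neg h1, add_zero]
    rw [Finset.sum_congr rfl fun j _ => hsplit j, Finset.sum_add_distrib,
      Finset.sum_ite_eq' Finset.univ j0, Finset.sum_ite_eq' Finset.univ j1]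
    simp; ring
  refine ⟨Z, hZY, ?_, ?_⟩
  · rw [htr, hc2, Real.sqrt_sq (by positivity)]
  · intro U V μ hU hV hμ hZeq i
    have hVVt : V * Vᵀ = 1 := mul_eq_one_comm.mp hV
    have h1 : Zᵀ * Z = V * Matrix.diagonal (fun i => μ i * μ i) * Vᵀ := by
      rw [hZeq, Matrix.transpose_mul, Matrix.transpose_mul, Matrix.transpose_transpose,
        Matrix.diagonal_transpose]
      simp only [Matrix.mul_assoc]
      rw [← Matrix.mul_assoc Uᵀ U, hU, Matrix.one_mul, ← Matrix.mul_assoc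
        (Matrix.diagonal μ) (Matrix.diagonal μ), Matrix.diagonal_mul_diagonal]
    have hdiag : Matrix.diagonal (fun i => μ i * μ i) = Vᵀ * (Zᵀ * Z) * V := by
      rw [h1]
      simp only [← Matrix.mul_assoc]
      rw [hV, Matrix.one_mul, Matrix.mul_assoc, hV, Matrix.mul_one]
    have hentry : μ i * μ i = (Vᵀ * (Zᵀ * Z) * V) i i := by
      have h := congrArg (fun M => M i i) hdiag
      simp only [Matrix.diagonal_apply_eq] at h
      exact h
    have hVi : (∑ k, V k i * V k i) = 1 := by
      have h := congrArg (fun M => M i i) hV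
      simp only [Matrix.mul_apply, Matrix.transpose_apply, Matrix.one_apply_eq] at h
      exact h
    have hbound : (Vᵀ * (Zᵀ * Z) * V) i i ≤ c ^ 2 := by
      rw [hZZ]
      have hexp : (Vᵀ * Matrix.diagonal d * V) i i = ∑ k, d k * (V k i * V k i) := by
        rw [Matrix.mul_apply]
        refine Finset.sum_congr rfl fun k _ => ?_
        rw [Matrix.mul_diagonal, Matrix.transpose_apply]
        ring
      rw [hexp]
      calc (∑ k, d k * (V k i * V k i)) ≤ ∑ k, c ^ 2 * (V k i * V k i) := by
            refine Finset.sum_le_sum fun k _ => ?_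
            have h1 := hdle' k
            have h2 := hdnn' k
            nlinarith [mul_self_nonneg (V k i)]
        _ = c ^ 2 := by rw [← Finset.mul_sum, hVi, mul_one]
    have hle : μ i ≤ c := by
      refine sq_le_imp_le _ _ (hμ i) hcpos ?_
      calc μ i ^ 2 = μ i * μ i := sq (μ i) ▸ by ring
        _ = (Vᵀ * (Zᵀ * Z) * V) i i := hentry
        _ ≤ c ^ 2 := hbound
    exact lt_of_le_of_lt hle hclt
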